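/- Let k be a field, R a commutative nonnegatively-graded k-algebra with R₀ = k and augmentation ideal R⁺, M a free R-module of finite rank r, and N ⊆ M an R-submodule such that N is free of rank equal to the k-dimension of the image of N in M/(R⁺M). Then the sequence 0 → R⁺N → N → image of N in M/(R⁺M) → 0 is exact, i.e., the kernel of the composite N ↪ M → M/(R⁺M) restricted to N equals R⁺·N. -/

import Mathlib

/-- For a graded k-algebra R with R₀ = k, a finite free R-module M
and a submodule N free of rank equal to dim_k of its image ν(N) in M/(R⁺M), the
kernel of ν : N → M/(R⁺M) equals R⁺·N, i.e. 0 → R⁺N → N → ν(N) → 0 is exact. -/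
theorem stmt10 {k R : Type*} [Field k] [CommRing R] [Algebra k R]
    (𝒜 : ℕ → Submodule k R) [GradedAlgebra 𝒜] (h0 : 𝒜 0 = (1 : Submodule k R))
    (Rplus : Ideal R) (hRplus : Rplus = Ideal.span {a : R | ∃ n, 0 < n ∧ a ∈ 𝒜 n})
    {M : Type*} [AddCommGroup M] [Module R M] [Module k M] [IsScalarTower k R M]
    [Module.Free R M] [Module.Finite R M]
    (N : Submodule R M) [Module.Free R N] [Module.Finite R N]
    (ν : N →ₗ[R] M ⧸ (Rplus • ⊤ : Submodule R M))
    (hν : ν = (Rplus • ⊤ : Submodule R M).mkQ.comp N.subtype)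
    (hrank : Module.finrank R N =
      Module.finrank k (Submodule.restrictScalars k (LinearMap.range ν))) :
    LinearMap.ker ν = (Rplus • ⊤ : Submodule R N) := by
  classical
  rcases subsingleton_or_nontrivial R with hR | hR
  · haveI : Subsingleton M := Module.subsingleton R M
    haveI : Subsingleton N := inferInstance
    exact Subsingleton.elim _ _
  -- graded facts
  have hpos : ∀ (i : ℕ) (x : R), i ≠ 0 → x ∈ 𝒜 i → x ∈ Rplus := by
    intro i x hi hx
    rw [hRplus]
    exact Ideal.subset_span ⟨i, Nat.pos_of_ne_zero hi, hx⟩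
  have hRle : Rplus ≤ RingHom.ker (GradedRing.projZeroRingHom 𝒜) := by
    rw [hRplus]
    refine Ideal.span_le.mpr ?_
    rintro a ⟨n, hn, ha⟩
    simp only [SetLike.mem_coe, RingHom.mem_ker, GradedRing.projZeroRingHom_apply]
    rw [DirectSum.decompose_of_mem_ne 𝒜 ha hn.ne']
  have hsub : ∀ r : R, r - GradedRing.projZeroRingHom 𝒜 r ∈ Rplus := by
    intro r
    have h1 := DirectSum.sum_support_decompose 𝒜 r
    have key : r - (DirectSum.decompose 𝒜 r 0 : R)
        = ∑ i ∈ (DirectSum.decompose 𝒜 r).support.erase 0,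
            (DirectSum.decompose 𝒜 r i : R) := by
      by_cases h0' : 0 ∈ (DirectSum.decompose 𝒜 r).support
      · rw [← Finset.add_sum_erase _ _ h0'] at h1
        rw [eq_comm, eq_sub_iff_add_eq, add_comm]
        exact h1
      · rw [Finset.erase_eq_of_notMem h0', h1]
        have : (DirectSum.decompose 𝒜 r) 0 = 0 := DFinsupp.notMem_support_iff.mp h0'
        rw [this]
        simp
    rw [GradedRing.projZeroRingHom_apply, key]
    exact Submodule.sum_mem _ fun i hi =>
      hpos i _ (Finset.ne_of_mem_erase hi) (SetLike.coe_mem _)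
  have halg : ∀ c : k, algebraMap k R c ∈ Rplus → c = 0 := by
    intro c hc
    have h1 : algebraMap k R c ∈ 𝒜 0 := by
      rw [h0]
      exact Submodule.mem_one.mpr ⟨c, rfl⟩
    have h2 : GradedRing.projZeroRingHom 𝒜 (algebraMap k R c) = algebraMap k R c := by
      rw [GradedRing.projZeroRingHom_apply, DirectSum.decompose_of_mem_same 𝒜 h1]
    have h3 := hRle hc
    rw [RingHom.mem_ker, h2] at h3
    exact (algebraMap k R).injective (by simpa using h3)
  have hdecomp : ∀ r : R, ∃ c : k, ∃ s, s ∈ Rplus ∧ r = algebraMap k R c + s := by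
    intro r
    have h1 : (DirectSum.decompose 𝒜 r 0 : R) ∈ (1 : Submodule k R) :=
      h0.le (SetLike.coe_mem _)
    obtain ⟨c, hc⟩ := Submodule.mem_one.mp h1
    refine ⟨c, r - (DirectSum.decompose 𝒜 r 0 : R), ?_, by rw [hc]; ring⟩
    have h2 := hsub r
    rwa [GradedRing.projZeroRingHom_apply] at h2
  -- easy inclusion
  have hker_ge : (Rplus • ⊤ : Submodule R N) ≤ LinearMap.ker ν := by
    intro x hx
    rw [LinearMap.mem_ker, hν]
    simp only [LinearMap.comp_apply, Submodule.subtype_apply, Submodule.mkQ_apply]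
    rw [Submodule.Quotient.mk_eq_zero]
    have h1 : (x : M) ∈ Submodule.map N.subtype (Rplus • ⊤ : Submodule R N) :=
      Submodule.mem_map_of_mem hx
    rw [Submodule.map_smul''] at h1
    exact Submodule.smul_mono le_rfl le_top h1
  set P : Submodule R N := (Rplus • ⊤ : Submodule R N) with hP
  let νbar : (N ⧸ P) →ₗ[R] M ⧸ (Rplus • ⊤ : Submodule R M) := P.liftQ ν hker_ge
  let ι := Module.Free.ChooseBasisIndex R N
  let b : Module.Basis ι R N := Module.Free.chooseBasis R N
  have hrep : ∀ y : N, y ∈ P → ∀ i, b.repr y i ∈ Rplus := by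
    intro y hy
    refine Submodule.smul_induction_on hy ?_ ?_
    · intro r hr n _ i
      rw [map_smul, Finsupp.smul_apply, smul_eq_mul]
      exact Ideal.mul_mem_right _ _ hr
    · intro x y hx hy i
      rw [map_add, Finsupp.add_apply]
      exact Ideal.add_mem _ (hx i) (hy i)
  let v : ι → N ⧸ P := fun i => Submodule.Quotient.mk (b i)
  have hind : LinearIndependent k v := by
    rw [Fintype.linearIndependent_iff]
    intro f hf i
    have key : P.mkQ (∑ j, algebraMap k R (f j) • b j) = ∑ j, f j • v j := by
      rw [map_sum]
      refine Finset.sum_congr rfl fun j _ => ?_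
      rw [map_smul, algebraMap_smul]
      rfl
    have hy : (∑ j, algebraMap k R (f j) • b j) ∈ P := by
      rw [← Submodule.Quotient.mk_eq_zero]
      show P.mkQ _ = 0
      rw [key, hf]
    have h1 := hrep _ hy i
    have hco : b.repr (∑ j, algebraMap k R (f j) • b j) i = algebraMap k R (f i) := by
      rw [map_sum, Finsupp.finset_sum_apply]
      have hterm : ∀ j, (b.repr (algebraMap k R (f j) • b j)) i
          = algebraMap k R (f j) * (if j = i then 1 else 0) := by
        intro j
        rw [map_smul, Finsupp.smul_apply, Module.Basis.repr_self, Finsupp.single_apply, smul_eq_mul]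
      rw [Finset.sum_congr rfl fun j _ => hterm j]
      simp
    rw [hco] at h1
    exact halg _ h1
  have hspan : ⊤ ≤ Submodule.span k (Set.range v) := by
    rintro q -
    obtain ⟨x, rfl⟩ := Submodule.mkQ_surjective P q
    choose c s hs hcs using hdecomp
    have term : ∀ (r : R) (n : ↥N), P.mkQ (r • n) = c r • P.mkQ n := by
      intro r n
      conv_lhs => rw [hcs r]
      rw [add_smul, map_add]
      have h0s : P.mkQ (s r • n) = 0 := by
        rw [Submodule.mkQ_apply, Submodule.Quotient.mk_eq_zero]
        exact Submodule.smul_mem_smul (hs r) trivial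
      rw [h0s, add_zero, map_smul, algebraMap_smul]
    have hx : P.mkQ x = ∑ i, c (b.repr x i) • v i := by
      conv_lhs => rw [← b.sum_repr x]
      rw [map_sum]
      exact Finset.sum_congr rfl fun i _ => term _ _
    rw [hx]
    exact Submodule.sum_mem _ fun i _ =>
      Submodule.smul_mem _ _ (Submodule.subset_span ⟨i, rfl⟩)
  let B : Module.Basis ι k (N ⧸ P) := Module.Basis.mk hind hspan
  haveI : FiniteDimensional k (N ⧸ P) := Module.Finite.of_basis B
  have hfr : Module.finrank k (N ⧸ P) = Module.finrank R N := by
    rw [Module.finrank_eq_card_basis B, Module.finrank_eq_card_chooseBasisIndex R N]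
  let g := νbar.restrictScalars k
  have hg : ∀ z : ↥N, g (P.mkQ z) = ν z := fun z => rfl
  have hrange : LinearMap.range g = Submodule.restrictScalars k (LinearMap.range ν) := by
    ext x
    simp only [LinearMap.mem_range, Submodule.restrictScalars_mem]
    constructor
    · rintro ⟨y, rfl⟩
      obtain ⟨z, rfl⟩ := Submodule.mkQ_surjective P y
      exact ⟨z, (hg z).symm⟩
    · rintro ⟨z, rfl⟩
      exact ⟨P.mkQ z, hg z⟩
  have hkerg : LinearMap.ker g = ⊥ := by
    have h1 := LinearMap.finrank_range_add_finrank_ker g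
    rw [hrange, ← hrank, ← hfr] at h1
    have h2 : Module.finrank k (LinearMap.ker g) = 0 := by omega
    exact Submodule.finrank_eq_zero.mp h2
  refine le_antisymm ?_ hker_ge
  intro x hx
  have h1 : g (P.mkQ x) = 0 := by
    show νbar (P.mkQ x) = 0
    rw [Submodule.mkQ_apply]
    rw [Submodule.liftQ_apply]
    exact hx
  have h2 : P.mkQ x = 0 := by
    rw [← LinearMap.mem_ker, hkerg] at h1
    simpa using h1
  rwa [Submodule.mkQ_apply, Submodule.Quotient.mk_eq_zero] at h2
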